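/- Every finitely generated ideal of A is generated by at most two elements: for every finitely generated ideal I of A there exist a, b ∈ A such that I is the ideal generated by {a, b}. -/

import Mathlib

open Ideal UniqueFactorizationMonoid in
theorem dedekind_two_gen {R : Type*} [CommRing R] [IsDedekindDomain R]
    (I : Ideal R) : ∃ a b : R, I = Ideal.span {a, b} := by
  classical
  rcases eq_or_ne I ⊥ with rfl | hI0
  · exact ⟨0, 0, by simp [Ideal.span_singleton_eq_bot.mpr rfl]⟩
  obtain ⟨a, haI, ha0⟩ := Submodule.exists_mem_ne_zero_of_ne_bot hI0
  have hsa : Ideal.span {a} ≠ ⊥ := by simpa [Ideal.span_singleton_eq_bot] using ha0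
  set s : Finset (Ideal R) := (normalizedFactors (Ideal.span {a})).toFinset with hs
  set f : Ideal R → ℕ := fun P => (normalizedFactors I).count P with hf
  have hprime : ∀ P ∈ s, Prime P := fun P hP =>
    prime_of_normalized_factor P (Multiset.mem_toFinset.mp hP)
  have hex : ∀ P ∈ s, ∃ x, x ∈ P ^ f P ∧ x ∉ P ^ (f P + 1) := by
    intro P hP
    obtain ⟨x, hx1, hx2⟩ := Ideal.exists_mem_pow_notMem_pow_succ P (hprime P hP).ne_zero
      (Ideal.isPrime_of_prime (hprime P hP)).ne_top (f P)
    exact ⟨x, hx1, hx2⟩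
  choose x hx1 hx2 using hex
  obtain ⟨b, hb⟩ := IsDedekindDomain.exists_forall_sub_mem_ideal (s := s) id (fun P => f P + 1)
      hprime (fun i _ j _ hij => hij) (fun P => x P.1 P.2)
  simp only [id_eq] at hb
  have hbmem : ∀ P ∈ s, b ∈ P ^ f P := by
    intro P hP
    have h1 : b - x P hP ∈ P ^ (f P + 1) := hb P hP
    have : b = (b - x P hP) + x P hP := by ring
    rw [this]
    exact add_mem (Ideal.pow_le_pow_right (Nat.le_succ _) h1) (hx1 P hP)
  have hbnot : ∀ P ∈ s, b ∉ P ^ (f P + 1) := by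
    intro P hP hmem
    have : x P hP = b - (b - x P hP) := by ring
    exact hx2 P hP (this ▸ sub_mem hmem (hb P hP))
  -- I divides span {a}
  have hIdvd : I ∣ Ideal.span {a} := Ideal.dvd_iff_le.mpr (by
    rw [Ideal.span_le]; simpa using haI)
  have hnfI : normalizedFactors I ≤ normalizedFactors (Ideal.span {a}) :=
    (dvd_iff_normalizedFactors_le_normalizedFactors hI0 hsa).mp hIdvd
  have hsubset : (normalizedFactors I).toFinset ⊆ s :=
    Multiset.toFinset_subset.mpr (Multiset.subset_of_le hnfI)
  -- b ∈ I
  have hbI : b ∈ I := by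
    have hIeq : I = ∏ P ∈ (normalizedFactors I).toFinset, P ^ f P := by
      conv_lhs => rw [← _root_.prod_normalizedFactors_eq_self hI0]
      exact Finset.prod_multiset_count _
    rw [hIeq, ← IsDedekindDomain.inf_prime_pow_eq_prod _ _ _
      (fun P hP => hprime P (hsubset hP)) (fun i _ j _ hij => hij)]
    exact (Submodule.mem_finsetInf).mpr fun P hP => hbmem P (hsubset hP)
  refine ⟨a, b, le_antisymm ?_ ?_⟩
  · -- I ≤ span {a, b} : show span{a,b} divides I
    have hJa : a ∈ Ideal.span ({a, b} : Set R) := Ideal.subset_span (by simp)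
    have hJb : b ∈ Ideal.span ({a, b} : Set R) := Ideal.subset_span (by simp)
    have hJ0 : Ideal.span ({a, b} : Set R) ≠ ⊥ := fun h => ha0 (by
      rw [h] at hJa; simpa using hJa)
    have hb0 : Ideal.span {b} ≠ ⊥ → True := fun _ => trivial
    have hJdvda : Ideal.span ({a, b} : Set R) ∣ Ideal.span {a} :=
      Ideal.dvd_iff_le.mpr (by rw [Ideal.span_le]; simpa using hJa)
    have hnfJ : normalizedFactors (Ideal.span ({a, b} : Set R)) ≤
        normalizedFactors (Ideal.span {a}) :=
      (dvd_iff_normalizedFactors_le_normalizedFactors hJ0 hsa).mp hJdvda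
    rw [← Ideal.dvd_iff_le]
    rw [dvd_iff_normalizedFactors_le_normalizedFactors hJ0 hI0, Multiset.le_iff_count]
    intro Q
    by_cases hQ : Q ∈ normalizedFactors (Ideal.span ({a, b} : Set R))
    · have hQs : Q ∈ s := by
        rw [hs, Multiset.mem_toFinset]
        exact Multiset.mem_of_le hnfJ hQ
      have hQp : Prime Q := hprime Q hQs
      haveI : Q.IsPrime := Ideal.isPrime_of_prime hQp
      have hbne : b ≠ 0 := fun h => hbnot Q hQs (by rw [h]; exact zero_mem _)
      have hsb : Ideal.span {b} ≠ ⊥ := by simpa [Ideal.span_singleton_eq_bot] using hbne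
      have hJdvdb : Ideal.span ({a, b} : Set R) ∣ Ideal.span {b} :=
        Ideal.dvd_iff_le.mpr (by rw [Ideal.span_le]; simpa using hJb)
      have h1 : (normalizedFactors (Ideal.span ({a, b} : Set R))).count Q ≤
          (normalizedFactors (Ideal.span {b})).count Q :=
        Multiset.le_iff_count.mp
          ((dvd_iff_normalizedFactors_le_normalizedFactors hJ0 hsb).mp hJdvdb) Q
      have h2 : (normalizedFactors (Ideal.span {b})).count Q = f Q := by
        refine Ideal.count_normalizedFactors_eq ?_ ?_
        · rw [Ideal.span_le]
          simpa using hbmem Q hQs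
        · intro hle
          exact hbnot Q hQs (hle (Ideal.subset_span rfl))
      simp only [hf] at h2
      omega
    · simp [Multiset.count_eq_zero_of_notMem hQ]
  · rw [Ideal.span_le]
    rintro y (rfl | rfl)
    exacts [haI, hbI]

open Polynomial in
theorem exists_pow_isSeparable {K Ω : Type*} [Field K] [Field Ω] [Algebra K Ω]
    (q : ℕ) [ExpChar K q] (x : Ω) (hx : IsIntegral K x) :
    ∃ m : ℕ, IsSeparable K (x ^ q ^ m) := by
  obtain ⟨g, hgsep, m, hg⟩ := (minpoly.irreducible hx).hasSeparableContraction q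
  refine ⟨m, ?_⟩
  have h0 : aeval (x ^ q ^ m) g = 0 := by
    rw [← Polynomial.expand_aeval, hg, minpoly.aeval]
  exact hgsep.of_dvd (minpoly.dvd K _ h0)

open IntermediateField in
theorem IsSeparable.pow_sep {K Ω : Type*} [Field K] [Field Ω] [Algebra K Ω]
    {x : Ω} (h : IsSeparable K x) (n : ℕ) : IsSeparable K (x ^ n) := by
  haveI : Algebra.IsSeparable K K⟮x⟯ :=
    (IntermediateField.isSeparable_adjoin_simple_iff_isSeparable K Ω).mpr h
  exact IntermediateField.isSeparable_of_mem_isSeparable K Ω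
    (pow_mem (IntermediateField.mem_adjoin_simple_self K x) n)

set_option maxHeartbeats 1000000 in
set_option synthInstance.maxHeartbeats 400000 in
open IntermediateField in
/-- Let `k` be an algebraically closed field, `K = k(t)` the fraction field of
`k[t]`, `Ω` a fixed algebraic closure of `K`, and `A` the integral closure of `k[t]` in `Ω`.
Every finitely generated ideal of `A` is generated by at most two elements. -/
theorem every_fg_ideal_two_generated
    (k : Type*) [Field k] [IsAlgClosed k]
    (Ω : Type*) [Field Ω] [Algebra (Polynomial k) Ω] [Algebra (RatFunc k) Ω]
    [IsScalarTower (Polynomial k) (RatFunc k) Ω] [IsAlgClosure (RatFunc k) Ω]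
    (I : Ideal (integralClosure (Polynomial k) Ω)) (hI : I.FG) :
    ∃ a b : integralClosure (Polynomial k) Ω, I = Ideal.span {a, b} := by
  classical
  obtain ⟨S, hS⟩ := hI
  rw [← hS]
  clear hS I
  revert S
  set K := RatFunc k
  set A := integralClosure (Polynomial k) Ω with hA
  intro S
  haveI : IsAlgClosed Ω := IsAlgClosure.isAlgClosed K
  haveI : Algebra.IsAlgebraic K Ω := IsAlgClosure.isAlgebraic
  obtain ⟨q, hq⟩ := ExpChar.exists K
  haveI := hq
  haveI hqΩ : ExpChar Ω q := expChar_of_injective_algebraMap (algebraMap K Ω).injective q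
  have hq0 : 0 < q := expChar_pos K q
  -- integrality over K of all elements of Ω
  have hintK : ∀ y : Ω, IsIntegral K y := fun y =>
    (Algebra.IsAlgebraic.isAlgebraic y).isIntegral
  -- choose a power of q making all generators separable
  have hsepm : ∀ z : {z // z ∈ S}, ∃ m : ℕ, IsSeparable K (((z : A) : Ω) ^ q ^ m) :=
    fun z => exists_pow_isSeparable q _ (hintK _)
  choose m hm using hsepm
  set M : ℕ := Finset.univ.sup fun z : {z // z ∈ S} => m z with hM
  have hsep : ∀ z : {z // z ∈ S}, IsSeparable K (((z : A) : Ω) ^ q ^ M) := by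
    intro z
    have hle : m z ≤ M := Finset.le_sup (Finset.mem_univ z)
    have : ((z : A) : Ω) ^ q ^ M = (((z : A) : Ω) ^ q ^ m z) ^ q ^ (M - m z) := by
      rw [← pow_mul, ← pow_add, Nat.add_sub_cancel' hle]
    rw [this]
    exact (hm z).pow_sep _
  -- the iterated Frobenius equivalence
  set φ : Ω ≃+* Ω := iterateFrobeniusEquiv Ω q M with hφ
  have hφ_apply : ∀ y : Ω, φ y = y ^ q ^ M := fun y => by
    rw [hφ, iterateFrobeniusEquiv_apply, iterateFrobenius_def]
  -- A is stable under φ and φ⁻¹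
  have hmem_iff : ∀ y : Ω, IsIntegral (Polynomial k) (φ y) ↔ IsIntegral (Polynomial k) y := by
    intro y
    rw [hφ_apply]
    constructor
    · rintro ⟨f, hf, hf0⟩
      refine ⟨(Polynomial.expand _ (q ^ M)) f, hf.expand (pow_pos hq0 M), ?_⟩
      rwa [Polynomial.eval₂_eq_eval_map, Polynomial.map_expand, Polynomial.expand_eval,
        ← Polynomial.eval₂_eq_eval_map]
    · intro h
      exact h.pow _
  -- restrict φ to a ring automorphism of A
  let e : A ≃+* A :=
  { toFun := fun x => ⟨φ x, (hmem_iff x).mpr x.2⟩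
    invFun := fun x => ⟨φ.symm x, by
      have : IsIntegral (Polynomial k) (φ (φ.symm (x : Ω))) := by
        rw [φ.apply_symm_apply]; exact x.2
      exact (hmem_iff _).mp this⟩
    left_inv := fun x => Subtype.ext (φ.symm_apply_apply x)
    right_inv := fun x => Subtype.ext (φ.apply_symm_apply x)
    map_mul' := fun x y => Subtype.ext (map_mul φ (x : Ω) (y : Ω))
    map_add' := fun x y => Subtype.ext (map_add φ (x : Ω) (y : Ω)) }
  -- the twisted ideal
  set J : Ideal A := Ideal.map (e : A →+* A) (Ideal.span (S : Set A)) with hJ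
  -- the set of twisted generators in Ω
  set G : Set Ω := (fun z : A => (z : Ω) ^ q ^ M) '' (S : Set A) with hG
  haveI hGfin : Finite G := (S.finite_toSet.image _).to_subtype
  have hGsep : ∀ y ∈ G, IsSeparable K y := by
    rintro y ⟨z, hz, rfl⟩
    exact hsep ⟨z, hz⟩
  -- the finite separable subextension
  set L : IntermediateField K Ω := IntermediateField.adjoin K G with hL
  haveI : FiniteDimensional K L :=
    IntermediateField.finiteDimensional_adjoin fun y _ => hintK y
  haveI : Algebra.IsSeparable K L :=
    (IntermediateField.isSeparable_adjoin_iff_isSeparable K Ω).mpr hGsep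
  -- algebra structure of Polynomial k on L
  letI : Algebra (Polynomial k) L :=
    ((algebraMap K L).comp (algebraMap (Polynomial k) K)).toAlgebra
  haveI : IsScalarTower (Polynomial k) K L := IsScalarTower.of_algebraMap_eq fun _ => rfl
  haveI : IsScalarTower (Polynomial k) L Ω := IsScalarTower.of_algebraMap_eq fun r => by
    show algebraMap (Polynomial k) Ω r = algebraMap L Ω ((algebraMap K L) (algebraMap (Polynomial k) K r))
    rw [← IsScalarTower.algebraMap_apply K L Ω, ← IsScalarTower.algebraMap_apply (Polynomial k) K Ω]
  -- the Dedekind domain B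
  set B := integralClosure (Polynomial k) L with hB
  haveI : IsDedekindDomain B := integralClosure.isDedekindDomain (Polynomial k) K L
  -- generators in B
  have hGL : ∀ z : {z // z ∈ S}, ((z : A) : Ω) ^ q ^ M ∈ L :=
    fun z => IntermediateField.subset_adjoin K G ⟨(z : A), z.2, rfl⟩
  have hint : ∀ z : {z // z ∈ S},
      IsIntegral (Polynomial k) (⟨((z : A) : Ω) ^ q ^ M, hGL z⟩ : L) := by
    intro z
    rw [← isIntegral_algebraMap_iff (R := Polynomial k) (algebraMap L Ω).injective]
    exact IsIntegral.pow ((z : A)).2 _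
  let g : {z // z ∈ S} → B := fun z => ⟨⟨((z : A) : Ω) ^ q ^ M, hGL z⟩, hint z⟩
  -- the homomorphism B →+* A
  let ρ : B →+* A :=
  { toFun := fun w => ⟨algebraMap L Ω (w : L),
      (isIntegral_algebraMap_iff (R := Polynomial k) (algebraMap L Ω).injective).mpr w.2⟩
    map_one' := Subtype.ext (map_one (algebraMap L Ω))
    map_mul' := fun x y => Subtype.ext (map_mul (algebraMap L Ω) _ _)
    map_zero' := Subtype.ext (map_zero (algebraMap L Ω))
    map_add' := fun x y => Subtype.ext (map_add (algebraMap L Ω) _ _) }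
  -- two generators for the ideal of B
  obtain ⟨a', b', hab⟩ := dedekind_two_gen (Ideal.span (Set.range g))
  -- J is the image of that ideal
  have hJmap : J = Ideal.map ρ (Ideal.span (Set.range g)) := by
    rw [hJ, Ideal.map_span, Ideal.map_span]
    congr 1
    rw [Set.image_eq_range, ← Set.range_comp]
    refine congrArg Set.range (funext fun z => Subtype.ext ?_)
    show φ ((z : A) : Ω) = algebraMap L Ω ((g z : B) : L)
    rw [hφ_apply]
    rfl
  refine ⟨e.symm (ρ a'), e.symm (ρ b'), ?_⟩
  have hfinal : Ideal.span (S : Set A) = Ideal.map (e.symm : A →+* A) J := by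
    rw [hJ, Ideal.map_of_equiv]
  rw [hfinal, hJmap, hab, Ideal.map_span, Ideal.map_span, Set.image_pair, Set.image_pair]
  rfl
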